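/- The maximum fidelity of the single-photon Fock state |1⟩ with a pure single-mode Gaussian state equals 3√3/(4e) ≈ 0.478; equivalently, sup over squeezed displaced vacua S(ξ)D(α)|0⟩ of |⟨1| S(ξ) D(α) |0⟩|² = 3√3/(4e). -/

import Mathlib

open Complex

/-- The stellar function of the pure Gaussian state `S(ξ)D(α)|0⟩` with `ξ = r e^{iθ}`:
`F*(z) = (1/√cosh r)·exp(−(1/2)e^{−iθ} tanh r·z² + (α/cosh r)z
  + (1/2)e^{iθ} tanh r·α² − |α|²/2)`. -/
noncomputable def gaussianStellar (r θ : ℝ) (α : ℂ) (z : ℂ) : ℂ :=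
  (1 / (Real.sqrt (Real.cosh r) : ℂ)) *
    Complex.exp (-(1 / 2) * Complex.exp (-(θ * I)) * (Real.tanh r : ℂ) * z ^ 2 +
      (α / (Real.cosh r : ℂ)) * z +
      (1 / 2) * Complex.exp (θ * I) * (Real.tanh r : ℂ) * α ^ 2 -
      (‖α‖ ^ 2 : ℂ) / 2)

lemma deriv_gaussianStellar (r θ : ℝ) (α : ℂ) :
    deriv (gaussianStellar r θ α) 0 =
      (1 / (Real.sqrt (Real.cosh r) : ℂ)) *
        (Complex.exp ((1 / 2) * Complex.exp (θ * I) * (Real.tanh r : ℂ) * α ^ 2 -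
            (‖α‖ ^ 2 : ℂ) / 2) * (α / (Real.cosh r : ℂ))) := by
  have hp : HasDerivAt (fun z : ℂ =>
      -(1 / 2) * Complex.exp (-(θ * I)) * (Real.tanh r : ℂ) * z ^ 2 +
      (α / (Real.cosh r : ℂ)) * z +
      (1 / 2) * Complex.exp (θ * I) * (Real.tanh r : ℂ) * α ^ 2 -
      (‖α‖ ^ 2 : ℂ) / 2) (α / (Real.cosh r : ℂ)) 0 := by
    have h1 : HasDerivAt (fun z : ℂ => z ^ 2) (2 * (0:ℂ) ^ 1) 0 := hasDerivAt_pow 2 0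
    have h2 := (h1.const_mul (-(1 / 2) * Complex.exp (-(θ * I)) * (Real.tanh r : ℂ))).add
      ((hasDerivAt_id (0:ℂ)).const_mul (α / (Real.cosh r : ℂ)))
    have h3 := (h2.add_const
      ((1 / 2) * Complex.exp (θ * I) * (Real.tanh r : ℂ) * α ^ 2)).sub_const
      ((‖α‖ ^ 2 : ℂ) / 2)
    exact h3.congr_deriv (by ring)
  have h4 := (hp.cexp.const_mul (1 / (Real.sqrt (Real.cosh r) : ℂ)))
  have harg : (-(1 / 2) * Complex.exp (-(θ * I)) * (Real.tanh r : ℂ) * (0:ℂ) ^ 2 +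
      (α / (Real.cosh r : ℂ)) * 0 +
      (1 / 2) * Complex.exp (θ * I) * (Real.tanh r : ℂ) * α ^ 2 -
      (‖α‖ ^ 2 : ℂ) / 2) =
      ((1 / 2) * Complex.exp (θ * I) * (Real.tanh r : ℂ) * α ^ 2 -
      (‖α‖ ^ 2 : ℂ) / 2) := by ring
  rw [harg] at h4
  exact h4.deriv

lemma normSq_deriv (r θ : ℝ) (α : ℂ) :
    ‖deriv (gaussianStellar r θ α) 0‖ ^ 2 =
      ‖α‖ ^ 2 / Real.cosh r ^ 3 *
        Real.exp (Real.tanh r * (Complex.exp (θ * I) * α ^ 2).re - ‖α‖ ^ 2) := by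
  have hc : 0 < Real.cosh r := Real.cosh_pos r
  rw [deriv_gaussianStellar]
  have hre : ((1 / 2) * Complex.exp (θ * I) * (Real.tanh r : ℂ) * α ^ 2 -
      (‖α‖ ^ 2 : ℂ) / 2).re =
      Real.tanh r / 2 * (Complex.exp (θ * I) * α ^ 2).re - ‖α‖ ^ 2 / 2 := by
    have h : (1 / 2 : ℂ) * Complex.exp (θ * I) * (Real.tanh r : ℂ) * α ^ 2 =
        ((Real.tanh r / 2 : ℝ) : ℂ) * (Complex.exp (θ * I) * α ^ 2) := by
      push_cast; ring
    rw [Complex.sub_re, h, Complex.re_ofReal_mul]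
    simp [← Complex.ofReal_pow]
  rw [norm_mul, norm_mul, norm_div, norm_div, Complex.norm_real, Complex.norm_real,
    norm_one, Real.norm_eq_abs, Real.norm_eq_abs, Complex.norm_exp,
    hre, _root_.abs_of_nonneg (Real.sqrt_nonneg _), _root_.abs_of_pos hc]
  rw [mul_pow, mul_pow, div_pow, div_pow, one_pow, Real.sq_sqrt hc.le,
    pow_two (Real.exp _), ← Real.exp_add,
    show Real.tanh r / 2 * (Complex.exp (θ * I) * α ^ 2).re - ‖α‖ ^ 2 / 2 +
        (Real.tanh r / 2 * (Complex.exp (θ * I) * α ^ 2).re - ‖α‖ ^ 2 / 2) =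
      Real.tanh r * (Complex.exp (θ * I) * α ^ 2).re - ‖α‖ ^ 2 from by ring]
  field_simp

set_option maxHeartbeats 1000000 in
lemma realBound (r s u : ℝ) (hs : 0 ≤ s) (hu : |u| ≤ s) :
    s / Real.cosh r ^ 3 * Real.exp (Real.tanh r * u - s) ≤
      3 * Real.sqrt 3 / (4 * Real.exp 1) := by
  set c := Real.cosh r with hcdef
  set τ := |Real.tanh r| with hτdef
  have hc1 : 1 ≤ c := Real.one_le_cosh r
  have hc0 : 0 < c := lt_of_lt_of_le one_pos hc1
  have hτ0 : 0 ≤ τ := abs_nonneg _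
  have hid : c ^ 2 * (1 - τ ^ 2) = 1 := by
    have h := Real.cosh_sq_sub_sinh_sq r
    have ht : τ ^ 2 = Real.sinh r ^ 2 / c ^ 2 := by
      rw [hτdef, _root_.sq_abs, Real.tanh_eq_sinh_div_cosh, div_pow]
    rw [ht]
    field_simp
    linarith
  have hτ1 : τ < 1 := by
    by_contra hcon
    push_neg at hcon
    have h1 : 1 ≤ τ ^ 2 := by nlinarith
    have h2 : c ^ 2 * (1 - τ ^ 2) ≤ 0 :=
      mul_nonpos_of_nonneg_of_nonpos (sq_nonneg c) (by linarith)
    linarith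
  have hA2 : Real.sqrt 3 ^ 2 = 3 := Real.sq_sqrt (by norm_num)
  have hA0 : 0 < Real.sqrt 3 := Real.sqrt_pos.mpr (by norm_num)
  have he : 0 < Real.exp 1 := Real.exp_pos 1
  have hMpos : 0 < 3 * Real.sqrt 3 / (4 * Real.exp 1) := by positivity
  rcases eq_or_lt_of_le hs with h | hs0
  · rw [← h]
    simp [hMpos.le]
  have h1τ : (0:ℝ) < 1 - τ := by linarith
  -- step A
  have hmono : Real.exp (Real.tanh r * u - s) ≤ Real.exp (τ * s - s) := by
    apply Real.exp_le_exp.mpr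
    have : Real.tanh r * u ≤ τ * s := by
      calc Real.tanh r * u ≤ |Real.tanh r * u| := le_abs_self _
        _ = τ * |u| := abs_mul _ _
        _ ≤ τ * s := by nlinarith
    linarith
  set x := (1 - τ) * s with hxdef
  have hx0 : 0 < x := mul_pos h1τ hs0
  have h2 : x * Real.exp 1 ≤ Real.exp x := by
    have h := Real.add_one_le_exp (x - 1)
    rw [Real.exp_sub] at h
    have hex := Real.exp_pos x
    calc x * Real.exp 1 ≤ Real.exp x / Real.exp 1 * Real.exp 1 := by nlinarith
      _ = Real.exp x := by field_simp
  have hstepA : s * Real.exp (τ * s - s) ≤ 1 / ((1 - τ) * Real.exp 1) := by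
    have hexs : Real.exp (τ * s - s) = (Real.exp x)⁻¹ := by
      rw [← Real.exp_neg]; congr 1; rw [hxdef]; ring
    rw [hexs, ← div_eq_mul_inv, div_le_div_iff₀ (Real.exp_pos x) (mul_pos h1τ he)]
    calc s * ((1 - τ) * Real.exp 1) = x * Real.exp 1 := by rw [hxdef]; ring
      _ ≤ Real.exp x := h2
      _ = 1 * Real.exp x := (one_mul _).symm
  -- step B
  have hpoly : 16 * (1 - τ) * (1 + τ) ^ 3 ≤ 27 := by
    nlinarith [sq_nonneg (2 * τ - 1), sq_nonneg τ, sq_nonneg (1 + τ)]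
  have hcube : c ^ 6 * ((1 - τ) ^ 3 * (1 + τ) ^ 3) = 1 := by
    linear_combination (c ^ 4 * (1 - τ ^ 2) ^ 2 + c ^ 2 * (1 - τ ^ 2) + 1) * hid
  have hnn : (0:ℝ) ≤ (1 - τ) ^ 2 * c ^ 6 :=
    mul_nonneg (sq_nonneg _) (pow_nonneg hc0.le 6)
  have hB : 16 ≤ 27 * ((1 - τ) ^ 2 * c ^ 6) := by
    nlinarith [mul_le_mul_of_nonneg_right hpoly hnn, hcube]
  have hstepB : 4 ≤ 3 * Real.sqrt 3 * ((1 - τ) * c ^ 3) := by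
    set y := 3 * Real.sqrt 3 * ((1 - τ) * c ^ 3) with hydef
    have hy0 : 0 ≤ y := by positivity
    have hyy : y ^ 2 = 27 * ((1 - τ) ^ 2 * c ^ 6) := by
      rw [hydef]; linear_combination 9 * ((1 - τ) ^ 2 * c ^ 6) * hA2
    have hy2 : 16 ≤ y ^ 2 := by rw [hyy]; exact hB
    nlinarith [hy0, hy2]
  -- combine
  calc s / c ^ 3 * Real.exp (Real.tanh r * u - s)
      = s * Real.exp (Real.tanh r * u - s) / c ^ 3 := by ring
    _ ≤ s * Real.exp (τ * s - s) / c ^ 3 := by gcongr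
    _ ≤ (1 / ((1 - τ) * Real.exp 1)) / c ^ 3 := by gcongr
    _ ≤ 3 * Real.sqrt 3 / (4 * Real.exp 1) := by
        rw [div_div, div_le_div_iff₀ (by positivity) (by positivity)]
        nlinarith [mul_le_mul_of_nonneg_right hstepB he.le, he, hA0, hc0]

lemma cosh_log_sqrt3 : Real.cosh (Real.log (Real.sqrt 3)) = 2 / Real.sqrt 3 := by
  have h3 : (0:ℝ) < Real.sqrt 3 := Real.sqrt_pos.mpr (by norm_num)
  have hA2 : Real.sqrt 3 ^ 2 = 3 := Real.sq_sqrt (by norm_num)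
  rw [Real.cosh_eq, Real.exp_log h3, Real.exp_neg, Real.exp_log h3]
  field_simp
  nlinarith [hA2]

lemma tanh_log_sqrt3 : Real.tanh (Real.log (Real.sqrt 3)) = 1 / 2 := by
  have h3 : (0:ℝ) < Real.sqrt 3 := Real.sqrt_pos.mpr (by norm_num)
  have hA2 : Real.sqrt 3 ^ 2 = 3 := Real.sq_sqrt (by norm_num)
  rw [Real.tanh_eq_sinh_div_cosh, cosh_log_sqrt3, Real.sinh_eq,
    Real.exp_log h3, Real.exp_neg, Real.exp_log h3]
  rw [div_eq_iff (by positivity)]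
  field_simp
  nlinarith [hA2]

lemma attained :
    ‖deriv (gaussianStellar (Real.log (Real.sqrt 3)) 0 ((Real.sqrt 2 : ℝ) : ℂ)) 0‖ ^ 2 =
      3 * Real.sqrt 3 / (4 * Real.exp 1) := by
  have h3 : (0:ℝ) < Real.sqrt 3 := Real.sqrt_pos.mpr (by norm_num)
  have hA2 : Real.sqrt 3 ^ 2 = 3 := Real.sq_sqrt (by norm_num)
  have h2 : Real.sqrt 2 ^ 2 = 2 := Real.sq_sqrt (by norm_num)
  have habs : ‖((Real.sqrt 2 : ℝ) : ℂ)‖ ^ 2 = 2 := by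
    rw [Complex.norm_real, Real.norm_eq_abs, _root_.abs_of_nonneg (Real.sqrt_nonneg _), h2]
  have hre : (Complex.exp ((0:ℝ) * I) * ((Real.sqrt 2 : ℝ) : ℂ) ^ 2).re = 2 := by
    norm_num [← Complex.ofReal_pow, h2]
  rw [normSq_deriv, habs, hre, cosh_log_sqrt3, tanh_log_sqrt3]
  have : (1:ℝ) / 2 * 2 - 2 = -1 := by norm_num
  rw [this, Real.exp_neg]
  rw [div_pow, eq_div_iff (by positivity)]
  field_simp
  linear_combination 4 * hA2

/-- The maximum fidelity of the single-photon Fock state `|1⟩` with a pure single-mode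
Gaussian state `S(ξ)D(α)|0⟩` equals `3√3/(4e)`. Here
`⟨1|S(ξ)D(α)|0⟩ = (∂_z F*)(0)/√(1!) = (∂_z F*)(0)` in the stellar representation, so the
claim is `sup_{r,θ,α} |(∂_z gaussianStellar r θ α)(0)|² = 3√3/(4e)`. -/
theorem stmt_15 :
    sSup (Set.range fun p : ℝ × ℝ × ℂ =>
        ‖deriv (gaussianStellar p.1 p.2.1 p.2.2) 0‖ ^ 2) =
      3 * Real.sqrt 3 / (4 * Real.exp 1) := by
  have hub : ∀ y ∈ Set.range (fun p : ℝ × ℝ × ℂ =>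
      ‖deriv (gaussianStellar p.1 p.2.1 p.2.2) 0‖ ^ 2),
      y ≤ 3 * Real.sqrt 3 / (4 * Real.exp 1) := by
    rintro y ⟨⟨r, θ, α⟩, rfl⟩
    simp only
    rw [normSq_deriv]
    apply realBound
    · positivity
    · have h1 : |(Complex.exp (θ * I) * α ^ 2).re| ≤
          ‖Complex.exp (θ * I) * α ^ 2‖ := Complex.abs_re_le_norm _
      have h2 : ‖Complex.exp (θ * I) * α ^ 2‖ = ‖α‖ ^ 2 := by
        rw [norm_mul, norm_pow, Complex.norm_exp]
        simp
      rw [h2] at h1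
      exact h1
  have hmem : 3 * Real.sqrt 3 / (4 * Real.exp 1) ∈ Set.range (fun p : ℝ × ℝ × ℂ =>
      ‖deriv (gaussianStellar p.1 p.2.1 p.2.2) 0‖ ^ 2) :=
    ⟨(Real.log (Real.sqrt 3), 0, ((Real.sqrt 2 : ℝ) : ℂ)), attained⟩
  exact le_antisymm (csSup_le ⟨_, hmem⟩ hub) (le_csSup ⟨_, hub⟩ hmem)
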